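/- Let 1 < p < ∞ and let M_1, …, M_m : ℝ^n → ℝ^n (with m > 1) be paracontractions with respect to the p-norm ‖·‖_p on ℝ^n sharing at least one common fixed point. For each integer t ≥ 1 and each i ∈ {1,…,m}, let N_i(t) ⊆ {1,…,m} be a set of neighbor labels with i ∈ N_i(t), and let N(t) denote the directed graph on vertices {1,…,m} having an arc from j to i exactly when j ∈ N_i(t). Assume the sequence N(1), N(2), … is repeatedly jointly strongly connected: there exist positive integers l and ρ_0 such that for every integer k > 0, the composed graph N(kl+ρ_0−1) ∘ N(kl+ρ_0−2) ∘ ⋯ ∘ N((k−1)l+ρ_0) is strongly connected. Then for arbitrary initial vectors x_1(1), …, x_m(1) ∈ ℝ^n, the iterates defined by x_i(t+1) = M_i( (1/|N_i(t)|) · ∑_{j ∈ N_i(t)} x_j(t) ) for i ∈ {1,…,m} and t ≥ 1 all converge, as t → ∞, to one and the same limit, and this common limit is a common fixed point of M_1, …, M_m. -/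

import Mathlib

open Filter Topology Finset
open scoped ENNReal

def IsNormOn {E : Type*} [AddCommGroup E] [Module ℝ E] (N : E → ℝ) : Prop :=
  (∀ x, N x = 0 ↔ x = 0) ∧
  (∀ (c : ℝ) (x : E), N (c • x) = |c| * N x) ∧
  (∀ x y : E, N (x + y) ≤ N x + N y)

def IsParacontraction {E : Type*} [AddCommGroup E] [Module ℝ E] [TopologicalSpace E]
    (N : E → ℝ) (P : E → E) : Prop :=
  Continuous P ∧ ∀ x y : E, P x ≠ x → P y = y → N (P x - y) < N (x - y)

def QuasiNonexpansive {E : Type*} [AddCommGroup E] (N : E → ℝ) (P : E → E) : Prop :=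
  ∀ x y : E, P y = y → N (P x - y) ≤ N (x - y)

noncomputable def pnorm {n : ℕ} (p : ℝ) (x : Fin n → ℝ) : ℝ :=
  (∑ i, |x i| ^ p) ^ (1 / p)

noncomputable def pnormE {n : ℕ} (p : ℝ≥0∞) (x : Fin n → ℝ) : ℝ :=
  if p = ⊤ then ⨆ i, |x i| else (∑ i, |x i| ^ p.toReal) ^ (1 / p.toReal)

noncomputable def mixed22 {m n : ℕ} (x : Fin m → Fin n → ℝ) : ℝ :=
  pnorm 2 (fun i => pnorm 2 (x i))

noncomputable def mixedPInf {m n : ℕ} (p : ℝ) (x : Fin m → Fin n → ℝ) : ℝ :=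
  ⨆ i, pnorm p (x i)

noncomputable def mixedEInf {m n : ℕ} (p : ℝ≥0∞) (x : Fin m → Fin n → ℝ) : ℝ :=
  ⨆ i, pnormE p (x i)

def IsStochastic {m : ℕ} (S : Matrix (Fin m) (Fin m) ℝ) : Prop :=
  (∀ i j, 0 ≤ S i j) ∧ ∀ i, ∑ j, S i j = 1

def IsDoublyStochastic {m : ℕ} (S : Matrix (Fin m) (Fin m) ℝ) : Prop :=
  IsStochastic S ∧ ∀ j, ∑ i, S i j = 1

def kron {m n : ℕ} (S : Matrix (Fin m) (Fin m) ℝ) (x : Fin m → Fin n → ℝ) :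
    Fin m → Fin n → ℝ :=
  fun i => ∑ j, S i j • x j

def stackMap {m n : ℕ} (M : Fin m → (Fin n → ℝ) → (Fin n → ℝ)) :
    (Fin m → Fin n → ℝ) → (Fin m → Fin n → ℝ) :=
  fun x i => M i (x i)

def consensusSet (m n : ℕ) : Set (Fin m → Fin n → ℝ) :=
  {x | ∀ i j : Fin m, x i = x j}

def StronglyConnected {V : Type*} (G : V → V → Prop) : Prop :=
  ∀ i j : V, Relation.ReflTransGen G i j

def graphComp {V : Type*} (Gq Gp : V → V → Prop) : V → V → Prop :=
  fun i j => ∃ k, Gp i k ∧ Gq k j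

def composeChain {m : ℕ} (G : ℕ → Fin m → Fin m → Prop) (a : ℕ) :
    ℕ → (Fin m → Fin m → Prop)
  | 0 => G a
  | k + 1 => graphComp (G (a + (k + 1))) (composeChain G a k)

def mapChain {α : Type*} (F : ℕ → α → α) : ℕ → α → α
  | 0 => id
  | k + 1 => F (k + 1) ∘ mapChain F k

noncomputable def Phi {m : ℕ} (S : ℕ → Matrix (Fin m) (Fin m) ℝ) (τ t : ℕ) :
    Matrix (Fin m) (Fin m) ℝ :=
  (List.range (t - τ)).foldl (fun A k => S (τ + k + 1) * A) 1

noncomputable def ppow {n : ℕ} (p : ℝ) (v : Fin n → ℝ) : ℝ := ∑ c, |v c| ^ p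

lemma ppow_nonneg {n : ℕ} {p : ℝ} (v : Fin n → ℝ) : 0 ≤ ppow p v :=
  Finset.sum_nonneg fun c _ => Real.rpow_nonneg (abs_nonneg _) _

lemma pnorm_eq_ppow {n : ℕ} (p : ℝ) (v : Fin n → ℝ) : pnorm p v = ppow p v ^ (1/p) := rfl

lemma pnorm_nonneg {n : ℕ} (p : ℝ) (v : Fin n → ℝ) : 0 ≤ pnorm p v :=
  Real.rpow_nonneg (ppow_nonneg v) _

lemma rpow_inv_cancel' {p t : ℝ} (hp : 0 < p) (ht : 0 ≤ t) : (t ^ p) ^ (1/p) = t := by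
  rw [← Real.rpow_mul ht, mul_one_div_cancel hp.ne', Real.rpow_one]

lemma pnorm_le_iff {n : ℕ} {p t : ℝ} (hp : 0 < p) (ht : 0 ≤ t) (v : Fin n → ℝ) :
    pnorm p v ≤ t ↔ ppow p v ≤ t ^ p := by
  constructor
  · intro h
    have h2 : (pnorm p v) ^ p ≤ t ^ p := Real.rpow_le_rpow (pnorm_nonneg p v) h hp.le
    rwa [pnorm_eq_ppow, ← Real.rpow_mul (ppow_nonneg v), one_div_mul_cancel hp.ne',
      Real.rpow_one] at h2
  · intro h
    have h2 : (ppow p v) ^ (1/p) ≤ (t ^ p) ^ (1/p) :=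
      Real.rpow_le_rpow (ppow_nonneg v) h (by positivity)
    rwa [rpow_inv_cancel' hp ht] at h2

lemma pnorm_lt_iff {n : ℕ} {p t : ℝ} (hp : 0 < p) (ht : 0 ≤ t) (v : Fin n → ℝ) :
    pnorm p v < t ↔ ppow p v < t ^ p := by
  constructor
  · intro h
    have h2 : (pnorm p v) ^ p < t ^ p := Real.rpow_lt_rpow (pnorm_nonneg p v) h hp
    rwa [pnorm_eq_ppow, ← Real.rpow_mul (ppow_nonneg v), one_div_mul_cancel hp.ne',
      Real.rpow_one] at h2
  · intro h
    have h2 : (ppow p v) ^ (1/p) < (t ^ p) ^ (1/p) :=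
      Real.rpow_lt_rpow (ppow_nonneg v) h (by positivity)
    rwa [rpow_inv_cancel' hp ht] at h2

lemma ppow_eq_of_pnorm_eq {n : ℕ} {p t : ℝ} (hp : 0 < p) (ht : 0 ≤ t) {v : Fin n → ℝ}
    (h : pnorm p v = t) : ppow p v = t ^ p :=
  le_antisymm ((pnorm_le_iff hp ht v).1 h.le)
    (le_of_not_gt fun hlt => absurd ((pnorm_lt_iff hp ht v).2 hlt) (by rw [h]; exact lt_irrefl t))

lemma abs_le_pnorm {n : ℕ} {p : ℝ} (hp : 0 < p) (v : Fin n → ℝ) (c : Fin n) :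
    |v c| ≤ pnorm p v := by
  have h1 : |v c| ^ p ≤ ppow p v :=
    Finset.single_le_sum (f := fun c => |v c| ^ p)
      (fun c _ => Real.rpow_nonneg (abs_nonneg _) _) (Finset.mem_univ c)
  have h2 : (|v c| ^ p) ^ (1/p) ≤ (ppow p v) ^ (1/p) :=
    Real.rpow_le_rpow (Real.rpow_nonneg (abs_nonneg _) _) h1 (by positivity)
  rwa [rpow_inv_cancel' hp (abs_nonneg _)] at h2

lemma pnorm_zero' {n : ℕ} {p : ℝ} (hp : 0 < p) : pnorm p (0 : Fin n → ℝ) = 0 := by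
  rw [pnorm_eq_ppow]
  have : ppow p (0 : Fin n → ℝ) = 0 := by
    unfold ppow
    simp [Real.zero_rpow hp.ne']
  rw [this, Real.zero_rpow (by positivity)]

lemma continuous_abs_rpow (p : ℝ) (hp : 0 < p) : Continuous fun t : ℝ => |t| ^ p := by
  rw [continuous_iff_continuousAt]
  intro t
  exact (Real.continuousAt_rpow_const _ _ (Or.inr hp.le)).comp continuous_abs.continuousAt

lemma continuous_ppow {n : ℕ} {p : ℝ} (hp : 0 < p) : Continuous (ppow p (n := n)) :=
  continuous_finset_sum _ fun c _ => (continuous_abs_rpow p hp).comp (continuous_apply c)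

lemma continuous_pnorm {n : ℕ} {p : ℝ} (hp : 0 < p) : Continuous (pnorm p (n := n)) := by
  have h1 : Continuous fun t : ℝ => |t| ^ (1/p) := continuous_abs_rpow _ (by positivity)
  have h2 : (pnorm p (n := n)) = fun v => |ppow p v| ^ (1/p) := by
    funext v; rw [pnorm_eq_ppow, abs_of_nonneg (ppow_nonneg v)]
  rw [h2]; exact h1.comp (continuous_ppow hp)

lemma strictConvexOn_abs_rpow {p : ℝ} (hp : 1 < p) :
    StrictConvexOn ℝ Set.univ fun t : ℝ => |t| ^ p := by
  have hp0 : (0:ℝ) < p := one_pos.trans hp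
  refine ⟨convex_univ, ?_⟩
  intro x _ y _ hxy a b ha hb hab
  simp only [smul_eq_mul]
  by_cases habs : |x| = |y|
  · have hxe : x = -y := by
      rcases abs_eq_abs.1 habs with h | h
      · exact absurd h hxy
      · exact h
    have hx0 : x ≠ 0 := by
      intro h; apply hxy; rw [h] at hxe ⊢; rw [eq_comm, neg_eq_zero] at hxe; rw [hxe]
    have h1 : |a * x + b * y| = |a - b| * |x| := by
      rw [hxe, show a * -y + b * y = -((a - b) * y) by ring, abs_neg, abs_mul, abs_neg]
    have h2 : |a - b| < 1 := by
      rw [abs_lt]; constructor <;> nlinarith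
    have h3 : |a * x + b * y| < |x| := by
      rw [h1]
      calc |a - b| * |x| < 1 * |x| :=
        mul_lt_mul_of_pos_right h2 (abs_pos.2 hx0)
      _ = |x| := one_mul _
    calc |a * x + b * y| ^ p < |x| ^ p := Real.rpow_lt_rpow (abs_nonneg _) h3 hp0
    _ = a * |x| ^ p + b * |y| ^ p := by rw [← habs]; nlinarith [Real.rpow_nonneg (abs_nonneg x) p]
  · have h1 : |a * x + b * y| ≤ a * |x| + b * |y| := by
      calc |a * x + b * y| ≤ |a * x| + |b * y| := abs_add_le _ _
      _ = a * |x| + b * |y| := by rw [abs_mul, abs_mul, abs_of_pos ha, abs_of_pos hb]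
    have h2 : |a * x + b * y| ^ p ≤ (a * |x| + b * |y|) ^ p :=
      Real.rpow_le_rpow (abs_nonneg _) h1 hp0.le
    have h3 := (strictConvexOn_rpow hp).2 (Set.mem_Ici.2 (abs_nonneg x))
      (Set.mem_Ici.2 (abs_nonneg y)) habs ha hb hab
    simp only [smul_eq_mul] at h3
    exact lt_of_le_of_lt h2 h3

lemma strictConvexOn_ppow {n : ℕ} {p : ℝ} (hp : 1 < p) :
    StrictConvexOn ℝ Set.univ (ppow p (n := n)) := by
  refine ⟨convex_univ, ?_⟩
  intro x _ y _ hxy a b ha hb hab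
  obtain ⟨c0, hc0⟩ := Function.ne_iff.1 hxy
  have hterm : ∀ c ∈ Finset.univ (α := Fin n),
      |(a • x + b • y) c| ^ p ≤ a * |x c| ^ p + b * |y c| ^ p := by
    intro c _
    have := (strictConvexOn_abs_rpow hp).convexOn.2 (Set.mem_univ (x c)) (Set.mem_univ (y c))
      ha.le hb.le hab
    simpa [smul_eq_mul] using this
  have hstrict : |(a • x + b • y) c0| ^ p < a * |x c0| ^ p + b * |y c0| ^ p := by
    have := (strictConvexOn_abs_rpow hp).2 (Set.mem_univ (x c0)) (Set.mem_univ (y c0))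
      hc0 ha hb hab
    simpa [smul_eq_mul] using this
  have hlt := Finset.sum_lt_sum hterm ⟨c0, Finset.mem_univ c0, hstrict⟩
  simp only [smul_eq_mul]
  calc ppow p (a • x + b • y) < ∑ c, (a * |x c| ^ p + b * |y c| ^ p) := hlt
  _ = a * ppow p x + b * ppow p y := by
      rw [Finset.sum_add_distrib, ← Finset.mul_sum, ← Finset.mul_sum]; rfl

lemma avg_ppow_le {n m : ℕ} {p : ℝ} (hp : 1 < p) (s : Finset (Fin m)) (hs : s.Nonempty)
    (u : Fin m → Fin n → ℝ) :
    ppow p ((s.card : ℝ)⁻¹ • ∑ j ∈ s, u j) ≤ ∑ j ∈ s, (s.card : ℝ)⁻¹ * ppow p (u j) := by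
  have hcard : (0:ℝ) < s.card := by exact_mod_cast Finset.card_pos.2 hs
  have h1 : ∑ _j ∈ s, (s.card:ℝ)⁻¹ = 1 := by
    rw [Finset.sum_const, nsmul_eq_mul, mul_inv_cancel₀ hcard.ne']
  have h2 := (strictConvexOn_ppow (n := n) hp).convexOn.map_sum_le
    (w := fun _ => (s.card:ℝ)⁻¹) (p := u) (fun j _ => by positivity) h1
    (fun j _ => Set.mem_univ _)
  rw [Finset.smul_sum]
  simpa [smul_eq_mul] using h2

lemma sum_card_inv_mul {m : ℕ} (s : Finset (Fin m)) (hs : s.Nonempty) (a : ℝ) :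
    ∑ _j ∈ s, (s.card:ℝ)⁻¹ * a = a := by
  have hcard : (0:ℝ) < s.card := by exact_mod_cast Finset.card_pos.2 hs
  rw [Finset.sum_const, nsmul_eq_mul, ← mul_assoc, mul_inv_cancel₀ hcard.ne', one_mul]

lemma pnorm_avg_le {n m : ℕ} {p r : ℝ} (hp : 1 < p) (s : Finset (Fin m)) (hs : s.Nonempty)
    (u : Fin m → Fin n → ℝ) (hr : 0 ≤ r) (hb : ∀ j ∈ s, pnorm p (u j) ≤ r) :
    pnorm p ((s.card : ℝ)⁻¹ • ∑ j ∈ s, u j) ≤ r := by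
  have hp0 : (0:ℝ) < p := one_pos.trans hp
  rw [pnorm_le_iff hp0 hr]
  refine (avg_ppow_le hp s hs u).trans ?_
  have h1 : ∀ j ∈ s, (s.card:ℝ)⁻¹ * ppow p (u j) ≤ (s.card:ℝ)⁻¹ * r ^ p := fun j hj =>
    mul_le_mul_of_nonneg_left ((pnorm_le_iff hp0 hr (u j)).1 (hb j hj)) (by positivity)
  exact (Finset.sum_le_sum h1).trans (le_of_eq (sum_card_inv_mul s hs _))

lemma pnorm_avg_lt {n m : ℕ} {p r : ℝ} (hp : 1 < p) (s : Finset (Fin m)) (hs : s.Nonempty)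
    (u : Fin m → Fin n → ℝ) (hr : 0 < r) (hb : ∀ j ∈ s, pnorm p (u j) ≤ r)
    (hstrict : ∃ j0 ∈ s, pnorm p (u j0) < r) :
    pnorm p ((s.card : ℝ)⁻¹ • ∑ j ∈ s, u j) < r := by
  have hp0 : (0:ℝ) < p := one_pos.trans hp
  obtain ⟨j0, hj0, hj0lt⟩ := hstrict
  rw [pnorm_lt_iff hp0 hr.le]
  refine lt_of_le_of_lt (avg_ppow_le hp s hs u) ?_
  have h1 : ∀ j ∈ s, (s.card:ℝ)⁻¹ * ppow p (u j) ≤ (s.card:ℝ)⁻¹ * r ^ p := fun j hj =>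
    mul_le_mul_of_nonneg_left ((pnorm_le_iff hp0 hr.le (u j)).1 (hb j hj)) (by positivity)
  have h2 : (s.card:ℝ)⁻¹ * ppow p (u j0) < (s.card:ℝ)⁻¹ * r ^ p := by
    have hcard : (0:ℝ) < s.card := by exact_mod_cast Finset.card_pos.2 hs
    exact mul_lt_mul_of_pos_left ((pnorm_lt_iff hp0 hr.le (u j0)).1 hj0lt) (by positivity)
  calc ∑ j ∈ s, (s.card:ℝ)⁻¹ * ppow p (u j) < ∑ _j ∈ s, (s.card:ℝ)⁻¹ * r ^ p :=
        Finset.sum_lt_sum h1 ⟨j0, hj0, h2⟩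
  _ = r ^ p := sum_card_inv_mul s hs _

lemma avg_eq_of_pnorm_eq {n m : ℕ} {p r : ℝ} (hp : 1 < p) (s : Finset (Fin m)) (hs : s.Nonempty)
    (u : Fin m → Fin n → ℝ) (hb : ∀ j ∈ s, pnorm p (u j) = r)
    (havg : pnorm p ((s.card : ℝ)⁻¹ • ∑ j ∈ s, u j) = r) :
    ∀ j ∈ s, ∀ k ∈ s, u j = u k := by
  have hp0 : (0:ℝ) < p := one_pos.trans hp
  have hcard : (0:ℝ) < s.card := by exact_mod_cast Finset.card_pos.2 hs
  obtain ⟨j0, hj0⟩ := hs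
  have hr : 0 ≤ r := (hb j0 hj0) ▸ pnorm_nonneg p (u j0)
  have hsum1 : ∑ _j ∈ s, (s.card:ℝ)⁻¹ = 1 := by
    rw [Finset.sum_const, nsmul_eq_mul, mul_inv_cancel₀ hcard.ne']
  have hL : ppow p (∑ j ∈ s, (s.card:ℝ)⁻¹ • u j) = r ^ p := by
    rw [← Finset.smul_sum]; exact ppow_eq_of_pnorm_eq hp0 hr havg
  have hR : ∑ j ∈ s, (s.card:ℝ)⁻¹ • ppow p (u j) = r ^ p := by
    have : ∀ j ∈ s, (s.card:ℝ)⁻¹ • ppow p (u j) = (s.card:ℝ)⁻¹ * r ^ p := fun j hj => by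
      rw [smul_eq_mul, ppow_eq_of_pnorm_eq hp0 hr (hb j hj)]
    rw [Finset.sum_congr rfl this]; exact sum_card_inv_mul s ⟨j0, hj0⟩ _
  have h_eq : ∑ j ∈ s, (s.card:ℝ)⁻¹ • ppow p (u j) ≤ ppow p (∑ j ∈ s, (s.card:ℝ)⁻¹ • u j) := by
    rw [hL, hR]
  exact fun j hj k hk => (strictConvexOn_ppow hp).eq_of_le_map_sum
    (fun j _ => by positivity) hsum1 (fun j _ => Set.mem_univ _) h_eq hj hk

lemma avg_sub_eq {n m : ℕ} (s : Finset (Fin m)) (hs : s.Nonempty) (u : Fin m → Fin n → ℝ)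
    (y : Fin n → ℝ) :
    (s.card : ℝ)⁻¹ • ∑ j ∈ s, u j - y = (s.card : ℝ)⁻¹ • ∑ j ∈ s, (u j - y) := by
  have hcard : (0:ℝ) < s.card := by exact_mod_cast Finset.card_pos.2 hs
  rw [Finset.sum_sub_distrib, smul_sub, Finset.sum_const, ← Nat.cast_smul_eq_nsmul ℝ, smul_smul,
    inv_mul_cancel₀ hcard.ne', one_smul]

lemma chain_spread {m : ℕ} (Gr : ℕ → Fin m → Fin m → Prop) (Q : ℕ → Fin m → Prop) :
    ∀ (k a : ℕ), (∀ t, a ≤ t → t ≤ a + k → ∀ i j : Fin m, Gr t j i → Q t j → Q (t+1) i) →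
    ∀ j i, composeChain Gr a k j i → Q a j → Q (a + k + 1) i := by
  intro k
  induction k with
  | zero =>
    intro a hstep j i hch hQ
    exact hstep a le_rfl (by omega) i j hch hQ
  | succ k ih =>
    intro a hstep j i hch hQ
    simp only [composeChain, graphComp] at hch
    obtain ⟨mid, h1, h2⟩ := hch
    have h3 := ih a (fun t ht1 ht2 => hstep t ht1 (by omega)) j mid h1 hQ
    have h4 := hstep (a + k + 1) (by omega) (by omega) i mid (by
      have : a + (k + 1) = a + k + 1 := by omega
      rwa [this] at h2) h3
    have : a + k + 1 + 1 = a + (k + 1) + 1 := by omega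
    rwa [this] at h4

lemma cross_of_reflTransGen {m : ℕ} (R : Fin m → Fin m → Prop) (S : Finset (Fin m))
    {i o : Fin m} (h : Relation.ReflTransGen R i o) (hi : i ∈ S) (ho : o ∉ S) :
    ∃ u ∈ S, ∃ v, v ∉ S ∧ R u v := by
  revert hi
  induction h using Relation.ReflTransGen.head_induction_on with
  | refl => intro hi; exact absurd hi ho
  | head hab _ ih =>
    intro ha
    rename_i a c _
    by_cases hc : c ∈ S
    · exact ih hc
    · exact ⟨a, ha, c, hc, hab⟩

lemma composeChain_congr' {m : ℕ} (G1 G2 : ℕ → Fin m → Fin m → Prop) :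
    ∀ (k a1 a2 : ℕ), (∀ u, u ≤ k → G1 (a1 + u) = G2 (a2 + u)) →
    composeChain G1 a1 k = composeChain G2 a2 k := by
  intro k
  induction k with
  | zero =>
    intro a1 a2 h
    show G1 a1 = G2 a2
    simpa using h 0 le_rfl
  | succ k ih =>
    intro a1 a2 h
    simp only [composeChain]
    rw [ih a1 a2 (fun u hu => h u (by omega)), h (k+1) le_rfl]

lemma tendsto_finset_sup'' {ι : Type*} (s : Finset ι) (hs : s.Nonempty)
    (f : ℕ → ι → ℝ) (A : ι → ℝ) :
    (∀ i ∈ s, Tendsto (fun k => f k i) atTop (𝓝 (A i))) →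
    Tendsto (fun k => s.sup' hs (f k)) atTop (𝓝 (s.sup' hs A)) := by
  induction hs using Finset.Nonempty.cons_induction with
  | singleton a =>
    intro h
    simpa [Finset.sup'_singleton] using h a (Finset.mem_singleton_self a)
  | cons a s ha hs ih =>
    intro h
    have hc : ∀ g : ι → ℝ, (Finset.cons a s ha).sup' (Finset.cons_nonempty ha) g
        = g a ⊔ s.sup' hs g := fun g => Finset.sup'_cons hs g
    simp only [hc]
    exact (h a (Finset.mem_cons_self a s)).max
      (ih fun i hi => h i (Finset.mem_cons.2 (Or.inr hi)))

theorem stmt5 {n m : ℕ} (hm : 1 < m) (p : ℝ) (hp : 1 < p)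
    (M : Fin m → (Fin n → ℝ) → (Fin n → ℝ))
    (hpc : ∀ i, IsParacontraction (pnorm p) (M i))
    (hcommon : ∃ y : Fin n → ℝ, ∀ i, M i y = y)
    (Nbr : ℕ → Fin m → Finset (Fin m))
    (hself : ∀ t i, i ∈ Nbr t i)
    (l ρ₀ : ℕ) (hl : 0 < l) (hρ : 0 < ρ₀)
    (hconn : ∀ k : ℕ, StronglyConnected
      (composeChain (fun t j i => j ∈ Nbr t i) (k * l + ρ₀) (l - 1)))
    (x : ℕ → Fin m → Fin n → ℝ)
    (hx : ∀ t, 1 ≤ t → ∀ i, x (t + 1) i =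
      M i (((Nbr t i).card : ℝ)⁻¹ • ∑ j ∈ Nbr t i, x t j)) :
    ∃ z : Fin n → ℝ, (∀ i, Tendsto (fun t => x t i) atTop (𝓝 z)) ∧
      ∀ i, M i z = z := by
  classical
  obtain ⟨y, hy⟩ := hcommon
  have hp0 : (0:ℝ) < p := one_pos.trans hp
  have hmne : (Finset.univ : Finset (Fin m)).Nonempty :=
    ⟨⟨0, by omega⟩, Finset.mem_univ _⟩
  set dV : (Fin n → ℝ) → ℕ → ℝ :=
    fun z t => Finset.univ.sup' hmne (fun i => pnorm p (x t i - z)) with hdV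
  have hdVeq : ∀ z t, dV z t = Finset.univ.sup' hmne (fun i => pnorm p (x t i - z)) :=
    fun z t => rfl
  have hdV_le : ∀ z t i, pnorm p (x t i - z) ≤ dV z t := by
    intro z t i
    rw [hdVeq]
    exact Finset.le_sup' (fun i => pnorm p (x t i - z)) (Finset.mem_univ i)
  have hdV_nonneg : ∀ z t, 0 ≤ dV z t := fun z t =>
    le_trans (pnorm_nonneg p (x t ⟨0, by omega⟩ - z)) (hdV_le z t ⟨0, by omega⟩)
  have hNne : ∀ t i, (Nbr t i).Nonempty := fun t i => ⟨i, hself t i⟩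
  -- one step bound, generic in common fixed point z
  have key_le : ∀ z, (∀ i, M i z = z) → ∀ t, 1 ≤ t → ∀ i, ∀ r : ℝ, 0 ≤ r →
      (∀ j ∈ Nbr t i, pnorm p (x t j - z) ≤ r) → pnorm p (x (t+1) i - z) ≤ r := by
    intro z hz t ht i r hr hb
    rw [hx t ht i]
    have hAz : ((Nbr t i).card : ℝ)⁻¹ • (∑ j ∈ Nbr t i, x t j) - z
        = ((Nbr t i).card : ℝ)⁻¹ • ∑ j ∈ Nbr t i, (x t j - z) :=
      avg_sub_eq _ (hNne t i) _ _
    have havg : pnorm p (((Nbr t i).card : ℝ)⁻¹ • (∑ j ∈ Nbr t i, x t j) - z) ≤ r := by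
      rw [hAz]; exact pnorm_avg_le hp _ (hNne t i) _ hr hb
    by_cases hMA : M i (((Nbr t i).card : ℝ)⁻¹ • ∑ j ∈ Nbr t i, x t j)
        = ((Nbr t i).card : ℝ)⁻¹ • ∑ j ∈ Nbr t i, x t j
    · rw [hMA]; exact havg
    · exact le_trans (le_of_lt ((hpc i).2 _ z hMA (hz i))) havg
  have hdV_step : ∀ z, (∀ i, M i z = z) → ∀ t, 1 ≤ t → dV z (t+1) ≤ dV z t := by
    intro z hz t ht
    rw [hdVeq z (t+1)]
    refine Finset.sup'_le _ _ fun i _ =>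
      key_le z hz t ht i _ (hdV_nonneg z t) fun j _ => hdV_le z t j
  have hdV_mono : ∀ z, (∀ i, M i z = z) → ∀ t, 1 ≤ t → ∀ t', t ≤ t' → dV z t' ≤ dV z t := by
    intro z hz t ht t' htt'
    induction t' with
    | zero => omega
    | succ t' ih =>
      rcases Nat.eq_or_lt_of_le htt' with h | h
      · rw [h]
      · exact le_trans (hdV_step z hz t' (by omega)) (ih (by omega))
  -- finishing argument
  have finish : ∀ z, (∀ i, M i z = z) → (∀ ε : ℝ, 0 < ε → ∃ t0, 1 ≤ t0 ∧ dV z t0 < ε) →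
      ∃ z' : Fin n → ℝ, (∀ i, Tendsto (fun t => x t i) atTop (𝓝 z')) ∧
        ∀ i, M i z' = z' := by
    intro z hz hε
    refine ⟨z, fun i => ?_, hz⟩
    rw [tendsto_pi_nhds]
    intro c
    rw [Metric.tendsto_atTop]
    intro ε hε'
    obtain ⟨t0, ht0, hlt⟩ := hε ε hε'
    refine ⟨t0, fun t htt0 => ?_⟩
    have h1 : pnorm p (x t i - z) ≤ dV z t := hdV_le z t i
    have h2 : dV z t ≤ dV z t0 := hdV_mono z hz t0 ht0 t htt0
    have h3 : |x t i c - z c| ≤ pnorm p (x t i - z) := by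
      simpa using abs_le_pnorm hp0 (x t i - z) c
    rw [Real.dist_eq]
    have : x t i c - z c = (x t i - z) c := rfl
    linarith
  -- bounds with respect to y
  have hbound : ∀ t, 1 ≤ t → ∀ i, pnorm p (x t i - y) ≤ dV y 1 :=
    fun t ht i => le_trans (hdV_le y t i) (hdV_mono y hy 1 le_rfl t ht)
  have hbdd : BddBelow (Set.range fun t => dV y (t+1)) :=
    ⟨0, by rintro _ ⟨t, rfl⟩; exact hdV_nonneg y (t+1)⟩
  have hanti : Antitone fun t => dV y (t+1) :=
    antitone_nat_of_succ_le fun t => hdV_step y hy (t+1) (by omega)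
  set r := ⨅ t, dV y (t+1) with hrdef
  have hVtend : Tendsto (fun t => dV y (t+1)) atTop (𝓝 r) := tendsto_atTop_ciInf hanti hbdd
  have hr0 : 0 ≤ r := le_ciInf fun t => hdV_nonneg y (t+1)
  have hVseq : ∀ u : ℕ → ℕ, (∀ k, 1 ≤ u k) → Tendsto u atTop atTop →
      Tendsto (fun k => dV y (u k)) atTop (𝓝 r) := by
    intro u hu1 hu
    have heq : (fun k => dV y (u k)) = (fun t => dV y (t+1)) ∘ (fun k => u k - 1) := by
      funext k; simp only [Function.comp_apply]; congr 1; have := hu1 k; omega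
    rw [heq]
    refine hVtend.comp (tendsto_atTop.2 fun b => ?_)
    exact (tendsto_atTop.1 hu (b+1)).mono fun k hk => by omega
  rcases eq_or_lt_of_le hr0 with hrzero | hrpos
  · -- r = 0 : everything converges to y
    refine finish y hy ?_
    intro ε hε
    have h1 : Tendsto (fun t => dV y (t+1)) atTop (𝓝 0) := by rw [hrzero]; exact hVtend
    obtain ⟨t, ht⟩ := (h1.eventually_lt_const hε).exists
    exact ⟨t+1, by omega, ht⟩
  -- main case : r > 0
  set L := (m+1)*l with hLdef
  set T : ℕ → ℕ := fun k => k*l + ρ₀ with hTdef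
  have hT1 : ∀ k s, 1 ≤ T k + s := fun k s => by simp only [hTdef]; omega
  -- bounded window sequence
  set seq : ℕ → (Fin (L+1) → Fin m → Fin n → ℝ) :=
    fun k s i => x (T k + (s:ℕ)) i with hseqdef
  have hC : ∀ k, seq k ∈ Metric.closedBall (0 : Fin (L+1) → Fin m → Fin n → ℝ)
      (dV y 1 + ‖y‖) := by
    intro k
    rw [Metric.mem_closedBall, dist_zero_right]
    have h0R : 0 ≤ dV y 1 := hdV_nonneg y 1
    have h0 : (0:ℝ) ≤ dV y 1 + ‖y‖ := by positivity
    refine (pi_norm_le_iff_of_nonneg h0).2 fun s => ?_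
    refine (pi_norm_le_iff_of_nonneg h0).2 fun i => ?_
    refine (pi_norm_le_iff_of_nonneg h0).2 fun c => ?_
    have h1 : |x (T k + (s:ℕ)) i c - y c| ≤ dV y 1 := by
      have h2 : |(x (T k + (s:ℕ)) i - y) c| ≤ pnorm p (x (T k + (s:ℕ)) i - y) :=
        abs_le_pnorm hp0 _ c
      have h3 := hbound (T k + (s:ℕ)) (hT1 k s) i
      simpa using le_trans h2 h3
    have h2 : |y c| ≤ ‖y‖ := by
      simpa using norm_le_pi_norm y c
    have : ‖seq k s i c‖ = |x (T k + (s:ℕ)) i c| := rfl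
    rw [this]
    calc |x (T k + (s:ℕ)) i c| ≤ |x (T k + (s:ℕ)) i c - y c| + |y c| := by
          simpa using abs_add_le (x (T k + (s:ℕ)) i c - y c) (y c)
    _ ≤ dV y 1 + ‖y‖ := add_le_add h1 h2
  obtain ⟨Wlim, -, φ₁, hφ₁mono, hφ₁tend⟩ :=
    tendsto_subseq_of_bounded Metric.isBounded_closedBall hC
  -- pigeonhole on graph data over windows
  set D : ℕ → (Fin L → Fin m → Finset (Fin m)) :=
    fun k s i => Nbr (T k + (s:ℕ)) i with hDdef
  obtain ⟨Gfix, hGfix⟩ := Finite.exists_infinite_fiber (fun k => D (φ₁ k))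
  have hinf : {k | D (φ₁ k) = Gfix}.Infinite := by
    rw [← Set.infinite_coe_iff]
    exact hGfix
  set ψ : ℕ → ℕ := Nat.nth (fun k => D (φ₁ k) = Gfix) with hψdef
  have hψmono : StrictMono ψ := Nat.nth_strictMono hinf
  have hψmem : ∀ k, D (φ₁ (ψ k)) = Gfix := fun k => Nat.nth_mem_of_infinite hinf k
  set φ : ℕ → ℕ := fun k => φ₁ (ψ k) with hφdef
  have hφmono : StrictMono φ := hφ₁mono.comp hψmono
  have hseqtend : Tendsto (fun k => seq (φ k)) atTop (𝓝 Wlim) :=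
    hφ₁tend.comp hψmono.tendsto_atTop
  -- fixed graph data and limit window
  set G' : ℕ → Fin m → Finset (Fin m) := fun s i => Nbr (T (φ 0) + s) i with hG'def
  have hG'eq : ∀ k s, s < L → ∀ i, Nbr (T (φ k) + s) i = G' s i := by
    intro k s hs i
    have h1 : D (φ k) ⟨s, hs⟩ i = Gfix ⟨s, hs⟩ i := by rw [hψmem k]
    have h2 : D (φ 0) ⟨s, hs⟩ i = Gfix ⟨s, hs⟩ i := by rw [hψmem 0]
    have h3 : D (φ k) ⟨s, hs⟩ i = D (φ 0) ⟨s, hs⟩ i := h1.trans h2.symm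
    simpa [hDdef] using h3
  have hG'self : ∀ s i, i ∈ G' s i := fun s i => hself _ i
  have hG'ne : ∀ s i, (G' s i).Nonempty := fun s i => ⟨i, hG'self s i⟩
  set w' : ℕ → Fin m → Fin n → ℝ :=
    fun s i => if h : s < L + 1 then Wlim ⟨s, h⟩ i else 0 with hw'def
  have hst : ∀ s, s ≤ L → ∀ i, Tendsto (fun k => x (T (φ k) + s) i) atTop (𝓝 (w' s i)) := by
    intro s hs i
    have hs' : s < L + 1 := by omega
    have h1 : Tendsto (fun k => seq (φ k) ⟨s, hs'⟩ i) atTop (𝓝 (Wlim ⟨s, hs'⟩ i)) :=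
      tendsto_pi_nhds.1 (tendsto_pi_nhds.1 hseqtend ⟨s, hs'⟩) i
    have h2 : w' s i = Wlim ⟨s, hs'⟩ i := by rw [hw'def]; simp [hs']
    rw [h2]
    exact h1
  -- the sup at limit window times equals r
  have hsup : ∀ s, s ≤ L →
      Finset.univ.sup' hmne (fun i => pnorm p (w' s i - y)) = r := by
    intro s hs
    have h1 : Tendsto (fun k => dV y (T (φ k) + s)) atTop (𝓝 r) := by
      refine hVseq (fun k => T (φ k) + s) (fun k => hT1 _ _) ?_
      refine tendsto_atTop.2 fun b => Filter.eventually_atTop.2 ⟨b, fun k hk => ?_⟩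
      have h2 : k ≤ φ k := hφmono.le_apply
      have h3 : φ k ≤ φ k * l := Nat.le_mul_of_pos_right _ hl
      simp only [hTdef]; omega
    have h2 : Tendsto (fun k => Finset.univ.sup' hmne
        fun i => pnorm p (x (T (φ k) + s) i - y)) atTop
        (𝓝 (Finset.univ.sup' hmne fun i => pnorm p (w' s i - y))) := by
      refine tendsto_finset_sup'' _ hmne _ _ fun i _ => ?_
      have h3 : Tendsto (fun k => x (T (φ k) + s) i - y) atTop (𝓝 (w' s i - y)) :=
        (hst s hs i).sub tendsto_const_nhds
      exact ((continuous_pnorm hp0).tendsto _).comp h3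
    have h1' : Tendsto (fun k => Finset.univ.sup' hmne
        fun i => pnorm p (x (T (φ k) + s) i - y)) atTop (𝓝 r) := by
      simpa only [hdVeq] using h1
    exact tendsto_nhds_unique h2 h1'
  have hA : ∀ s, s ≤ L → ∀ i, pnorm p (w' s i - y) ≤ r := by
    intro s hs i
    rw [← hsup s hs]
    exact Finset.le_sup' (fun i => pnorm p (w' s i - y)) (Finset.mem_univ i)
  -- limit recursion
  have hrec : ∀ s, s < L → ∀ i, w' (s+1) i =
      M i (((G' s i).card : ℝ)⁻¹ • ∑ j ∈ G' s i, w' s j) := by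
    intro s hs i
    have h1 : Tendsto (fun k => x (T (φ k) + s + 1) i) atTop (𝓝 (w' (s+1) i)) := by
      have h := hst (s+1) (by omega) i
      have heq : ∀ k, T (φ k) + (s+1) = T (φ k) + s + 1 := fun k => by omega
      simpa [heq] using h
    have hFcont : Continuous fun u : Fin m → Fin n → ℝ =>
        M i (((G' s i).card : ℝ)⁻¹ • ∑ j ∈ G' s i, u j) :=
      (hpc i).1.comp ((continuous_finset_sum (G' s i) fun j _ => continuous_apply j).const_smul (((G' s i).card : ℝ)⁻¹))
    have h2 : Tendsto (fun k => (fun j => x (T (φ k) + s) j)) atTop (𝓝 (fun j => w' s j)) :=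
      tendsto_pi_nhds.2 fun j => hst s (by omega) j
    have h3 : Tendsto (fun k => M i (((G' s i).card : ℝ)⁻¹ • ∑ j ∈ G' s i, x (T (φ k) + s) j))
        atTop (𝓝 (M i (((G' s i).card : ℝ)⁻¹ • ∑ j ∈ G' s i, w' s j))) :=
      (hFcont.tendsto _).comp h2
    have h4 : ∀ k, x (T (φ k) + s + 1) i
        = M i (((G' s i).card : ℝ)⁻¹ • ∑ j ∈ G' s i, x (T (φ k) + s) j) := by
      intro k
      rw [hx (T (φ k) + s) (hT1 _ _) i, hG'eq k s hs i]
    rw [funext h4] at h1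
    exact tendsto_nhds_unique h1 h3
  -- connectivity of limit graph blocks
  have hconn' : ∀ b, b ≤ m → StronglyConnected
      (composeChain (fun t j i => j ∈ G' t i) (b*l) (l-1)) := by
    intro b hb
    have h1 := hconn (φ 0 + b)
    have heq : composeChain (fun t j i => j ∈ Nbr t i) ((φ 0 + b) * l + ρ₀) (l-1)
        = composeChain (fun t j i => j ∈ G' t i) (b*l) (l-1) := by
      refine composeChain_congr' _ _ (l-1) _ _ fun u hu => ?_
      have ht : (φ 0 + b) * l + ρ₀ + u = T (φ 0) + (b*l + u) := by
        have h2 := Nat.add_mul (φ 0) b l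
        simp only [hTdef]; omega
      rw [ht]
    intro i j
    rw [← heq]
    exact h1 i j
  -- spreading of strict inequality
  set Str : ℕ → Finset (Fin m) :=
    fun s => Finset.univ.filter (fun i => pnorm p (w' s i - y) < r) with hStrdef
  have hstep1 : ∀ s, s < L → ∀ i j, j ∈ G' s i → j ∈ Str s → i ∈ Str (s+1) := by
    intro s hs i j hjG hjS
    simp only [hStrdef, Finset.mem_filter, Finset.mem_univ, true_and] at hjS ⊢
    rw [hrec s hs i]
    have hAz : (((G' s i).card : ℝ)⁻¹ • ∑ j ∈ G' s i, w' s j) - y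
        = ((G' s i).card : ℝ)⁻¹ • ∑ j ∈ G' s i, (w' s j - y) :=
      avg_sub_eq _ (hG'ne s i) _ _
    have havg : pnorm p ((((G' s i).card : ℝ)⁻¹ • ∑ j ∈ G' s i, w' s j) - y) < r := by
      rw [hAz]
      exact pnorm_avg_lt hp _ (hG'ne s i) _ hrpos (fun j' hj' => hA s (by omega) j')
        ⟨j, hjG, hjS⟩
    by_cases hMA : M i (((G' s i).card : ℝ)⁻¹ • ∑ j ∈ G' s i, w' s j)
        = ((G' s i).card : ℝ)⁻¹ • ∑ j ∈ G' s i, w' s j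
    · rw [hMA]; exact havg
    · exact lt_trans ((hpc i).2 _ y hMA (hy i)) havg
  have hmonoS : ∀ s1 s2, s1 ≤ s2 → s2 ≤ L → Str s1 ⊆ Str s2 := by
    intro s1 s2 h12 h2
    induction s2 with
    | zero =>
      have : s1 = 0 := by omega
      rw [this]
    | succ s2 ih =>
      rcases Nat.eq_or_lt_of_le h12 with h | h
      · rw [h]
      · refine (ih (by omega) (by omega)).trans fun i hi => ?_
        exact hstep1 s2 (by omega) i i (hG'self s2 i) hi
  have hblock : ∀ b, 1 ≤ b → b ≤ m → ∀ j i,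
      composeChain (fun t j i => j ∈ G' t i) (b*l) (l-1) j i →
      j ∈ Str (b*l) → i ∈ Str (b*l + l) := by
    intro b hb1 hbm j i hch hj
    have hbl : b * l ≤ m * l := Nat.mul_le_mul_right l hbm
    have hml : (m+1)*l = m*l + l := by ring
    have h := chain_spread (fun t j i => j ∈ G' t i) (fun t i => i ∈ Str t) (l-1) (b*l)
      (fun t ht1 ht2 i' j' hG hQ => hstep1 t (by simp only [hLdef]; omega) i' j' hG hQ)
      j i hch hj
    have h2 : b*l + (l-1) + 1 = b*l + l := by omega
    rwa [h2] at h
  have hgrow : ∀ b, 1 ≤ b → b ≤ m → (Str (b*l)).Nonempty → Str (b*l) ≠ Finset.univ →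
      ∃ v, v ∉ Str (b*l) ∧ v ∈ Str ((b+1)*l) := by
    intro b hb1 hbm hne hnu
    obtain ⟨i0, hi0⟩ := hne
    obtain ⟨o, ho⟩ : ∃ o, o ∉ Str (b*l) := by
      by_contra h
      push_neg at h
      exact hnu (Finset.eq_univ_iff_forall.2 h)
    obtain ⟨u, hu, v, hv, huv⟩ :=
      cross_of_reflTransGen _ (Str (b*l)) (hconn' b hbm i0 o) hi0 ho
    have h1 : v ∈ Str (b*l + l) := hblock b hb1 hbm u v huv hu
    have h2 : (b+1)*l = b*l + l := by ring
    exact ⟨v, hv, by rwa [h2]⟩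
  have hcard : ∀ j, j ≤ m → (Str l).Nonempty →
      j + 1 ≤ (Str ((j+1)*l)).card ∨ Str ((j+1)*l) = Finset.univ := by
    intro j
    induction j with
    | zero =>
      intro _ hne
      left
      have h0 : (0+1)*l = l := by ring
      rw [h0]
      exact Finset.card_pos.2 hne
    | succ j ih =>
      intro hjm hne
      have hle1 : (j+1)*l ≤ (j+2)*l := Nat.mul_le_mul_right l (by omega)
      have hle2 : (j+2)*l ≤ (m+1)*l := Nat.mul_le_mul_right l (by omega)
      have hLeq : (j+2)*l ≤ L := by rw [hLdef]; exact hle2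
      rcases ih (by omega) hne with hc | huniv
      · by_cases he : Str ((j+1)*l) = Finset.univ
        · right
          have hsub := hmonoS ((j+1)*l) ((j+2)*l) hle1 hLeq
          rw [he] at hsub
          exact Finset.univ_subset_iff.1 hsub
        · obtain ⟨v, hv1, hv2⟩ := hgrow (j+1) (by omega) (by omega)
            (Finset.card_pos.1 (by omega)) he
          left
          have hsub : Str ((j+1)*l) ⊆ Str ((j+2)*l) := hmonoS _ _ hle1 hLeq
          have hss : Str ((j+1)*l) ⊂ Str ((j+2)*l) :=
            (Finset.ssubset_iff_of_subset hsub).2 ⟨v, by rwa [show (j+1+1)*l = (j+2)*l by ring] at hv2, hv1⟩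
          have hcc := Finset.card_lt_card hss
          have hgoal : (j+1+1)*l = (j+2)*l := by ring
          rw [hgoal]
          omega
      · right
        have hsub := hmonoS ((j+1)*l) ((j+2)*l) hle1 hLeq
        rw [huniv] at hsub
        exact Finset.univ_subset_iff.1 hsub
  have hlL : l ≤ L := by rw [hLdef]; nlinarith
  have hallr : ∀ s, s ≤ l → ∀ i, pnorm p (w' s i - y) = r := by
    intro s hs i
    refine le_antisymm (hA s (le_trans hs hlL) i) (le_of_not_gt fun hlt => ?_)
    have hi : i ∈ Str s := by
      simp only [hStrdef, Finset.mem_filter, Finset.mem_univ, true_and]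
      exact hlt
    have hne : (Str l).Nonempty := ⟨i, hmonoS s l hs hlL hi⟩
    have huniv : Str ((m+1)*l) = Finset.univ := by
      rcases hcard m le_rfl hne with hc | h
      · exfalso
        have h1 : (Str ((m+1)*l)).card ≤ m := by
          have := Finset.card_le_univ (Str ((m+1)*l))
          simpa using this
        omega
      · exact h
    obtain ⟨i', _, hi'⟩ := Finset.exists_mem_eq_sup' hmne (fun i => pnorm p (w' L i - y))
    have h1 : pnorm p (w' L i' - y) = r := by rw [← hi']; exact hsup L le_rfl
    have h2 : i' ∈ Str L := by
      rw [hLdef, huniv]; exact Finset.mem_univ i'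
    simp only [hStrdef, Finset.mem_filter, Finset.mem_univ, true_and] at h2
    rw [hLdef] at h1
    exact absurd h1 (ne_of_lt h2)
  -- consensus on the limit window
  have hcons : ∀ s, s < l → ∀ i, (∀ j ∈ G' s i, w' s j = w' s i) ∧
      M i (w' s i) = w' s i ∧ w' (s+1) i = w' s i := by
    intro s hs i
    have hsl : s ≤ l := hs.le
    have hsL : s < L := lt_of_lt_of_le hs hlL
    have hrec' := hrec s hsL i
    have hAz : (((G' s i).card : ℝ)⁻¹ • ∑ j ∈ G' s i, w' s j) - y
        = ((G' s i).card : ℝ)⁻¹ • ∑ j ∈ G' s i, (w' s j - y) :=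
      avg_sub_eq _ (hG'ne s i) _ _
    have h1 : pnorm p ((((G' s i).card : ℝ)⁻¹ • ∑ j ∈ G' s i, w' s j) - y) ≤ r := by
      rw [hAz]
      exact pnorm_avg_le hp _ (hG'ne s i) _ hr0 fun j hj => (hallr s hsl j).le
    have h2 : pnorm p (w' (s+1) i - y) = r := hallr (s+1) (by omega) i
    have h3 : r ≤ pnorm p ((((G' s i).card : ℝ)⁻¹ • ∑ j ∈ G' s i, w' s j) - y) := by
      rw [hrec'] at h2
      by_cases hMA : M i (((G' s i).card : ℝ)⁻¹ • ∑ j ∈ G' s i, w' s j)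
          = ((G' s i).card : ℝ)⁻¹ • ∑ j ∈ G' s i, w' s j
      · rw [hMA] at h2; exact h2.ge
      · exact (h2 ▸ (hpc i).2 _ y hMA (hy i)).le
    have hAr : pnorm p ((((G' s i).card : ℝ)⁻¹ • ∑ j ∈ G' s i, w' s j) - y) = r :=
      le_antisymm h1 h3
    have hall : ∀ j ∈ G' s i, ∀ k ∈ G' s i, w' s j - y = w' s k - y := by
      refine avg_eq_of_pnorm_eq hp _ (hG'ne s i) (fun j => w' s j - y)
        (fun j hj => hallr s hsl j) ?_
      rw [← hAz]
      exact hAr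
    have hnb : ∀ j ∈ G' s i, w' s j = w' s i := fun j hj => by
      have := hall j hj i (hG'self s i)
      exact sub_left_inj.1 this
    have hAi : ((G' s i).card : ℝ)⁻¹ • ∑ j ∈ G' s i, w' s j = w' s i := by
      rw [Finset.sum_congr rfl hnb, Finset.sum_const, ← Nat.cast_smul_eq_nsmul ℝ, smul_smul,
        inv_mul_cancel₀, one_smul]
      exact_mod_cast (Finset.card_pos.2 (hG'ne s i)).ne'
    have hfix : M i (w' s i) = w' s i := by
      by_contra hne'
      have hlt := (hpc i).2 (w' s i) y hne' (hy i)
      rw [hallr s hsl i] at hlt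
      rw [hrec', hAi] at h2
      exact absurd h2 (ne_of_lt hlt)
    exact ⟨hnb, hfix, by rw [hrec', hAi, hfix]⟩
  have hconst : ∀ s, s ≤ l → ∀ i, w' s i = w' 0 i := by
    intro s
    induction s with
    | zero => intro _ _; rfl
    | succ s ih =>
      intro hs i
      rw [(hcons s (by omega) i).2.2, ih (by omega) i]
  have harc : ∀ a b : Fin m, composeChain (fun t j i => j ∈ G' t i) 0 (l-1) a b →
      w' 0 b = w' 0 a := by
    intro a b hch
    have h := chain_spread (fun t j i => j ∈ G' t i) (fun _ i => w' 0 i = w' 0 a) (l-1) 0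
      ?_ a b hch rfl
    · exact h
    · intro t ht1 ht2 i j hG hQ
      have htl : t < l := by omega
      have h1 : w' t j = w' t i := (hcons t htl i).1 j hG
      have h2 : w' t j = w' 0 j := hconst t (by omega) j
      have h3 : w' t i = w' 0 i := hconst t (by omega) i
      rw [← h3, ← h1, h2]
      exact hQ
  have hrtg : ∀ a b : Fin m, w' 0 b = w' 0 a := by
    intro a b
    have h : Relation.ReflTransGen (composeChain (fun t j i => j ∈ G' t i) (0*l) (l-1)) a b :=
      hconn' 0 (Nat.zero_le m) a b
    rw [Nat.zero_mul] at h
    induction h with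
    | refl => rfl
    | tail _ hbc ih => exact (harc _ _ hbc).trans ih
  set z := w' 0 (⟨0, by omega⟩ : Fin m) with hzdef
  have hzfix : ∀ i, M i z = z := by
    intro i
    have h1 : w' 0 i = z := hrtg _ i
    rw [← h1]
    exact (hcons 0 hl i).2.1
  refine finish z hzfix ?_
  intro ε hε
  have h1 : ∀ i, Tendsto (fun k => pnorm p (x (T (φ k) + 0) i - z)) atTop (𝓝 0) := by
    intro i
    have h2 : Tendsto (fun k => x (T (φ k) + 0) i - z) atTop (𝓝 (w' 0 i - z)) :=
      (hst 0 (by omega) i).sub tendsto_const_nhds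
    have h3 : w' 0 i - z = 0 := by rw [hrtg _ i]; exact sub_self _
    rw [h3] at h2
    have h4 := ((continuous_pnorm hp0).tendsto 0).comp h2
    rwa [pnorm_zero' hp0] at h4
  have h2 : Tendsto (fun k => dV z (T (φ k) + 0)) atTop (𝓝 0) := by
    have h3 := tendsto_finset_sup'' Finset.univ hmne
      (fun k i => pnorm p (x (T (φ k) + 0) i - z)) (fun _ => (0:ℝ)) (fun i _ => h1 i)
    rw [Finset.sup'_const] at h3
    simp only [hdVeq]
    exact h3
  obtain ⟨k0, hk0⟩ := (h2.eventually_lt_const hε).exists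
  exact ⟨T (φ k0) + 0, hT1 _ _, hk0⟩
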